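/- In the case k = 2, d = 1 of the Rasch Poisson counts model, the determinant of the Fisher information matrix equals the elementary symmetric polynomial of degree three in the four products u_x := w_x λ(x), x ∈ {0,1}²: det M(w, β) = e₃(u_{00}, u_{01}, u_{10}, u_{11}). -/
import Mathlib


open Matrix

/-- For `k = 2`, `d = 1`, the determinant of the Fisher information matrix is the
elementary symmetric polynomial of degree three in the products `u_x = w_x λ(x)`. -/
theorem det_information_matrix_k2_d1 (β₀ β₁ β₂ : ℝ) (w : Bool → Bool → ℝ)
    (lam : Bool → Bool → ℝ)
    (hlam : ∀ a b, lam a b =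
      Real.exp (β₀ + (if a then β₁ else 0) + (if b then β₂ else 0)))
    (f : Bool → Bool → Fin 3 → ℝ)
    (hf : ∀ a b, f a b = ![1, if a then 1 else 0, if b then 1 else 0])
    (u : Bool → Bool → ℝ) (hu : ∀ a b, u a b = w a b * lam a b)
    (M : Matrix (Fin 3) (Fin 3) ℝ)
    (hM : M = ∑ x : Bool × Bool, u x.1 x.2 • vecMulVec (f x.1 x.2) (f x.1 x.2)) :
    M.det = u false false * u false true * u true false
      + u false false * u false true * u true true
      + u false false * u true false * u true true
      + u false true * u true false * u true true := by
  subst hM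
  rw [Matrix.det_fin_three]
  simp [Fintype.sum_prod_type, hf, vecMulVec, Matrix.sum_apply]
  ring
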